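/- arXiv:2303.11481 — 2 statements merged into one kernel-verified Lean document; each statement's English description precedes it below -/
import Mathlib

section
/- Let O be a subring of the real quaternions ℍ that is closed under quaternion conjugation (q ∈ O implies q̄ ∈ O). Then the set SL₂(O) of 2×2 matrices over ℍ with all four entries in O and Dieudonné determinant equal to 1 is a subgroup of the group of invertible 2×2 quaternionic matrices: it contains the identity matrix, it is closed under matrix multiplication, and every γ ∈ SL₂(O) has a two-sided inverse all of whose entries again lie in O and whose Dieudonné determinant is 1. -/
open Quaternion

/-- The Dieudonné determinant of a `2 × 2` quaternionic matrix `[[a,b],[c,d]]`: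
`det_H γ = sqrt(|a|²|d|² + |c|²|b|² − 2 Re(c ā b d̄))`. -/
noncomputable def detH (γ : Matrix (Fin 2) (Fin 2) ℍ) : ℝ :=
  Real.sqrt (normSq (γ 0 0) * normSq (γ 1 1) + normSq (γ 1 0) * normSq (γ 0 1)
    - 2 * (γ 1 0 * star (γ 0 0) * γ 0 1 * star (γ 1 1)).re)

/-- The complex `2 × 2` representation of a quaternion. -/
private def phiq (q : ℍ) : Matrix (Fin 2) (Fin 2) ℂ :=
  !![⟨q.re, q.imI⟩, ⟨q.imJ, q.imK⟩; ⟨-q.imJ, q.imK⟩, ⟨q.re, -q.imI⟩]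

/-- `phiq` as a ring homomorphism `ℍ →+* M₂(ℂ)`. -/
private def phi : ℍ →+* Matrix (Fin 2) (Fin 2) ℂ where
  toFun := phiq
  map_one' := by
    ext i j
    fin_cases i <;> fin_cases j <;>
      simp [phiq, Matrix.one_apply, Complex.ext_iff]
  map_mul' p q := by
    ext i j
    fin_cases i <;> fin_cases j <;>
      simp [phiq, Matrix.mul_apply, Fin.sum_univ_two, Complex.ext_iff,
        Quaternion.re_mul, Quaternion.imI_mul, Quaternion.imJ_mul, Quaternion.imK_mul] <;>
      first
        | (constructor <;> ring)
        | ring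
  map_zero' := by
    ext i j
    fin_cases i <;> fin_cases j <;> simp [phiq, Complex.ext_iff]
  map_add' p q := by
    ext i j
    fin_cases i <;> fin_cases j <;>
      simp [phiq, Matrix.add_apply, Complex.ext_iff] <;>
      first
        | (constructor <;> ring)
        | ring

/-- The induced ring hom `M₂(ℍ) →+* M₄(ℂ)` (indexed by `Fin 2 × Fin 2`). -/
private noncomputable def Psi : Matrix (Fin 2) (Fin 2) ℍ →+* Matrix (Fin 2 × Fin 2) (Fin 2 × Fin 2) ℂ :=
  (Matrix.compRingEquiv (Fin 2) (Fin 2) ℂ).toRingHom.comp phi.mapMatrix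

/-- The polynomial under the square root in the Dieudonné determinant. -/
private noncomputable def Dpoly (γ : Matrix (Fin 2) (Fin 2) ℍ) : ℝ :=
  normSq (γ 0 0) * normSq (γ 1 1) + normSq (γ 1 0) * normSq (γ 0 1)
    - 2 * (γ 1 0 * star (γ 0 0) * γ 0 1 * star (γ 1 1)).re

private def e4 : Fin 4 ≃ Fin 2 × Fin 2 where
  toFun := ![(0,0), (0,1), (1,0), (1,1)]
  invFun p := ![![0,1], ![2,3]] p.1 p.2
  left_inv := by decide
  right_inv := by decide

set_option maxHeartbeats 1000000 in
private theorem det_fin_four' {R : Type*} [CommRing R] (A : Matrix (Fin 4) (Fin 4) R) :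
    A.det =
      A 0 0*A 1 1*A 2 2*A 3 3
      - A 0 0*A 1 1*A 2 3*A 3 2
      - A 0 0*A 1 2*A 2 1*A 3 3
      + A 0 0*A 1 2*A 2 3*A 3 1
      + A 0 0*A 1 3*A 2 1*A 3 2
      - A 0 0*A 1 3*A 2 2*A 3 1
      - A 0 1*A 1 0*A 2 2*A 3 3
      + A 0 1*A 1 0*A 2 3*A 3 2
      + A 0 1*A 1 2*A 2 0*A 3 3
      - A 0 1*A 1 2*A 2 3*A 3 0
      - A 0 1*A 1 3*A 2 0*A 3 2
      + A 0 1*A 1 3*A 2 2*A 3 0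
      + A 0 2*A 1 0*A 2 1*A 3 3
      - A 0 2*A 1 0*A 2 3*A 3 1
      - A 0 2*A 1 1*A 2 0*A 3 3
      + A 0 2*A 1 1*A 2 3*A 3 0
      + A 0 2*A 1 3*A 2 0*A 3 1
      - A 0 2*A 1 3*A 2 1*A 3 0
      - A 0 3*A 1 0*A 2 1*A 3 2
      + A 0 3*A 1 0*A 2 2*A 3 1
      + A 0 3*A 1 1*A 2 0*A 3 2
      - A 0 3*A 1 1*A 2 2*A 3 0
      - A 0 3*A 1 2*A 2 0*A 3 1
      + A 0 3*A 1 2*A 2 1*A 3 0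
 := by
  rw [Matrix.det_succ_row_zero]
  simp only [Fin.sum_univ_succ, Matrix.det_fin_three, Matrix.submatrix_apply,
    Fin.succ_zero_eq_one, Fin.succ_one_eq_two, Fin.zero_succAbove, Fin.succ_succAbove_zero,
    Fin.succ_succAbove_one, Fin.val_zero, Fin.val_succ, Finset.univ_unique, Finset.sum_singleton,
    Fin.default_eq_zero, Fin.val_eq_zero, pow_succ, pow_zero]
  have h1 : (2 : Fin 3).succ = 3 := by decide
  have h2 : (2 : Fin 4).succAbove 2 = 3 := by decide
  have h3 : (3 : Fin 4).succAbove 2 = 2 := by decide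
  have h4 : (1 : Fin 4).succAbove 2 = 3 := by decide
  simp only [h1, h2, h3, h4]
  ring

set_option maxHeartbeats 2000000 in
private lemma det_Psi (γ : Matrix (Fin 2) (Fin 2) ℍ) : (Psi γ).det = ((Dpoly γ : ℝ) : ℂ) := by
  rw [← Matrix.det_submatrix_equiv_self e4, det_fin_four']
  have E : ∀ i j : Fin 4,
      (Psi γ).submatrix e4 e4 i j = phiq (γ (e4 i).1 (e4 j).1) (e4 i).2 (e4 j).2 :=
    fun i j => rfl
  simp only [E]
  simp only [e4, phiq, Equiv.coe_fn_mk]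
  have hre : ∀ x : ℝ, ((x:ℂ)^2).re = x^2 := by intro x; simp [pow_two]
  have him : ∀ x : ℝ, ((x:ℂ)^2).im = 0 := by intro x; simp [pow_two]
  norm_num [hre, him, Complex.ext_iff, Dpoly, Quaternion.normSq_def',
    Quaternion.re_mul, Quaternion.imI_mul, Quaternion.imJ_mul, Quaternion.imK_mul,
    Matrix.cons_val_zero, Matrix.cons_val_one, Matrix.head_cons, Matrix.cons_val_two, Matrix.cons_val_three, Matrix.tail_cons]
  constructor <;> ring

private lemma Dpoly_mul (γ δ : Matrix (Fin 2) (Fin 2) ℍ) :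
    Dpoly (γ * δ) = Dpoly γ * Dpoly δ := by
  have h2 := congrArg Matrix.det (map_mul Psi γ δ)
  rw [Matrix.det_mul, det_Psi, det_Psi, det_Psi] at h2
  exact_mod_cast h2

set_option maxHeartbeats 2000000 in
private lemma keyL00 (a b c d : ℍ) :
    a * (star a * ↑(normSq d) - star c * (d * star b)) + b * (star b * ↑(normSq c) - star d * (c * star a)) = ↑(normSq a * normSq d + normSq c * normSq b - 2 * (c * star a * b * star d).re) := by
  ext <;>
    simp only [Quaternion.re_mul, Quaternion.imI_mul, Quaternion.imJ_mul, Quaternion.imK_mul,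
      Quaternion.re_add, Quaternion.imI_add, Quaternion.imJ_add, Quaternion.imK_add,
      Quaternion.re_sub, Quaternion.imI_sub, Quaternion.imJ_sub, Quaternion.imK_sub,
      Quaternion.re_star, Quaternion.imI_star, Quaternion.imJ_star, Quaternion.imK_star,
      Quaternion.re_coe, Quaternion.imI_coe, Quaternion.imJ_coe, Quaternion.imK_coe,
      Quaternion.re_zero, Quaternion.imI_zero, Quaternion.imJ_zero, Quaternion.imK_zero,
      Quaternion.normSq_def'] <;>
  ring

set_option maxHeartbeats 2000000 in
private lemma keyL01 (a b c d : ℍ) :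
    a * (star c * ↑(normSq b) - star a * (b * star d)) + b * (star d * ↑(normSq a) - star b * (a * star c)) = 0 := by
  ext <;>
    simp only [Quaternion.re_mul, Quaternion.imI_mul, Quaternion.imJ_mul, Quaternion.imK_mul,
      Quaternion.re_add, Quaternion.imI_add, Quaternion.imJ_add, Quaternion.imK_add,
      Quaternion.re_sub, Quaternion.imI_sub, Quaternion.imJ_sub, Quaternion.imK_sub,
      Quaternion.re_star, Quaternion.imI_star, Quaternion.imJ_star, Quaternion.imK_star,
      Quaternion.re_coe, Quaternion.imI_coe, Quaternion.imJ_coe, Quaternion.imK_coe,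
      Quaternion.re_zero, Quaternion.imI_zero, Quaternion.imJ_zero, Quaternion.imK_zero,
      Quaternion.normSq_def'] <;>
  ring

set_option maxHeartbeats 2000000 in
private lemma keyL10 (a b c d : ℍ) :
    c * (star a * ↑(normSq d) - star c * (d * star b)) + d * (star b * ↑(normSq c) - star d * (c * star a)) = 0 := by
  ext <;>
    simp only [Quaternion.re_mul, Quaternion.imI_mul, Quaternion.imJ_mul, Quaternion.imK_mul,
      Quaternion.re_add, Quaternion.imI_add, Quaternion.imJ_add, Quaternion.imK_add,
      Quaternion.re_sub, Quaternion.imI_sub, Quaternion.imJ_sub, Quaternion.imK_sub,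
      Quaternion.re_star, Quaternion.imI_star, Quaternion.imJ_star, Quaternion.imK_star,
      Quaternion.re_coe, Quaternion.imI_coe, Quaternion.imJ_coe, Quaternion.imK_coe,
      Quaternion.re_zero, Quaternion.imI_zero, Quaternion.imJ_zero, Quaternion.imK_zero,
      Quaternion.normSq_def'] <;>
  ring

set_option maxHeartbeats 2000000 in
private lemma keyL11 (a b c d : ℍ) :
    c * (star c * ↑(normSq b) - star a * (b * star d)) + d * (star d * ↑(normSq a) - star b * (a * star c)) = ↑(normSq a * normSq d + normSq c * normSq b - 2 * (c * star a * b * star d).re) := by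
  ext <;>
    simp only [Quaternion.re_mul, Quaternion.imI_mul, Quaternion.imJ_mul, Quaternion.imK_mul,
      Quaternion.re_add, Quaternion.imI_add, Quaternion.imJ_add, Quaternion.imK_add,
      Quaternion.re_sub, Quaternion.imI_sub, Quaternion.imJ_sub, Quaternion.imK_sub,
      Quaternion.re_star, Quaternion.imI_star, Quaternion.imJ_star, Quaternion.imK_star,
      Quaternion.re_coe, Quaternion.imI_coe, Quaternion.imJ_coe, Quaternion.imK_coe,
      Quaternion.re_zero, Quaternion.imI_zero, Quaternion.imJ_zero, Quaternion.imK_zero,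
      Quaternion.normSq_def'] <;>
  ring

set_option maxHeartbeats 2000000 in
private lemma keyR00 (a b c d : ℍ) :
    (star a * ↑(normSq d) - star c * (d * star b)) * a + (star c * ↑(normSq b) - star a * (b * star d)) * c = ↑(normSq a * normSq d + normSq c * normSq b - 2 * (c * star a * b * star d).re) := by
  ext <;>
    simp only [Quaternion.re_mul, Quaternion.imI_mul, Quaternion.imJ_mul, Quaternion.imK_mul,
      Quaternion.re_add, Quaternion.imI_add, Quaternion.imJ_add, Quaternion.imK_add,
      Quaternion.re_sub, Quaternion.imI_sub, Quaternion.imJ_sub, Quaternion.imK_sub,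
      Quaternion.re_star, Quaternion.imI_star, Quaternion.imJ_star, Quaternion.imK_star,
      Quaternion.re_coe, Quaternion.imI_coe, Quaternion.imJ_coe, Quaternion.imK_coe,
      Quaternion.re_zero, Quaternion.imI_zero, Quaternion.imJ_zero, Quaternion.imK_zero,
      Quaternion.normSq_def'] <;>
  ring

set_option maxHeartbeats 2000000 in
private lemma keyR01 (a b c d : ℍ) :
    (star a * ↑(normSq d) - star c * (d * star b)) * b + (star c * ↑(normSq b) - star a * (b * star d)) * d = 0 := by
  ext <;>
    simp only [Quaternion.re_mul, Quaternion.imI_mul, Quaternion.imJ_mul, Quaternion.imK_mul,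
      Quaternion.re_add, Quaternion.imI_add, Quaternion.imJ_add, Quaternion.imK_add,
      Quaternion.re_sub, Quaternion.imI_sub, Quaternion.imJ_sub, Quaternion.imK_sub,
      Quaternion.re_star, Quaternion.imI_star, Quaternion.imJ_star, Quaternion.imK_star,
      Quaternion.re_coe, Quaternion.imI_coe, Quaternion.imJ_coe, Quaternion.imK_coe,
      Quaternion.re_zero, Quaternion.imI_zero, Quaternion.imJ_zero, Quaternion.imK_zero,
      Quaternion.normSq_def'] <;>
  ring

set_option maxHeartbeats 2000000 in
private lemma keyR10 (a b c d : ℍ) :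
    (star b * ↑(normSq c) - star d * (c * star a)) * a + (star d * ↑(normSq a) - star b * (a * star c)) * c = 0 := by
  ext <;>
    simp only [Quaternion.re_mul, Quaternion.imI_mul, Quaternion.imJ_mul, Quaternion.imK_mul,
      Quaternion.re_add, Quaternion.imI_add, Quaternion.imJ_add, Quaternion.imK_add,
      Quaternion.re_sub, Quaternion.imI_sub, Quaternion.imJ_sub, Quaternion.imK_sub,
      Quaternion.re_star, Quaternion.imI_star, Quaternion.imJ_star, Quaternion.imK_star,
      Quaternion.re_coe, Quaternion.imI_coe, Quaternion.imJ_coe, Quaternion.imK_coe,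
      Quaternion.re_zero, Quaternion.imI_zero, Quaternion.imJ_zero, Quaternion.imK_zero,
      Quaternion.normSq_def'] <;>
  ring

set_option maxHeartbeats 2000000 in
private lemma keyR11 (a b c d : ℍ) :
    (star b * ↑(normSq c) - star d * (c * star a)) * b + (star d * ↑(normSq a) - star b * (a * star c)) * d = ↑(normSq a * normSq d + normSq c * normSq b - 2 * (c * star a * b * star d).re) := by
  ext <;>
    simp only [Quaternion.re_mul, Quaternion.imI_mul, Quaternion.imJ_mul, Quaternion.imK_mul,
      Quaternion.re_add, Quaternion.imI_add, Quaternion.imJ_add, Quaternion.imK_add,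
      Quaternion.re_sub, Quaternion.imI_sub, Quaternion.imJ_sub, Quaternion.imK_sub,
      Quaternion.re_star, Quaternion.imI_star, Quaternion.imJ_star, Quaternion.imK_star,
      Quaternion.re_coe, Quaternion.imI_coe, Quaternion.imJ_coe, Quaternion.imK_coe,
      Quaternion.re_zero, Quaternion.imI_zero, Quaternion.imJ_zero, Quaternion.imK_zero,
      Quaternion.normSq_def'] <;>
  ring

private lemma detH_eq (γ : Matrix (Fin 2) (Fin 2) ℍ) : detH γ = Real.sqrt (Dpoly γ) := rfl

private lemma Dpoly_of_detH {γ : Matrix (Fin 2) (Fin 2) ℍ} (h : detH γ = 1) : Dpoly γ = 1 := by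
  rw [detH_eq, Real.sqrt_eq_one] at h
  exact h

private lemma Dpoly_one : Dpoly (1 : Matrix (Fin 2) (Fin 2) ℍ) = 1 := by
  simp [Dpoly, Matrix.one_apply]

set_option maxHeartbeats 4000000 in
/-- For a conjugation-closed subring `O` of the quaternions,
`SL₂(O)` (matrices with entries in `O` and Dieudonné determinant `1`) is a group:
it contains the identity, is closed under multiplication, and every element has a
two-sided inverse lying again in `SL₂(O)`. -/
theorem sl2_order_is_group (O : Subring ℍ) (hstar : ∀ q ∈ O, star q ∈ O) :
    let S : Set (Matrix (Fin 2) (Fin 2) ℍ) :=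
      {γ | (∀ i j, γ i j ∈ O) ∧ detH γ = 1}
    (1 : Matrix (Fin 2) (Fin 2) ℍ) ∈ S ∧
    (∀ γ ∈ S, ∀ δ ∈ S, γ * δ ∈ S) ∧
    (∀ γ ∈ S, ∃ δ ∈ S, γ * δ = 1 ∧ δ * γ = 1) := by
  intro S
  refine ⟨⟨?_, ?_⟩, ?_, ?_⟩
  · -- identity has entries in O
    intro i j
    by_cases h : i = j
    · rw [h, Matrix.one_apply_eq]; exact one_mem O
    · rw [Matrix.one_apply_ne h]; exact zero_mem O
  · -- detH 1 = 1
    rw [detH_eq, Dpoly_one, Real.sqrt_one]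
  · -- closure under multiplication
    rintro γ ⟨hγO, hγd⟩ δ ⟨hδO, hδd⟩
    refine ⟨?_, ?_⟩
    · intro i j
      rw [Matrix.mul_apply]
      exact sum_mem fun k _ => mul_mem (hγO i k) (hδO k j)
    · rw [detH_eq, Dpoly_mul, Dpoly_of_detH hγd, Dpoly_of_detH hδd, mul_one, Real.sqrt_one]
  · -- inverses
    rintro γ ⟨hγO, hγd⟩
    set a := γ 0 0 with ha'
    set b := γ 0 1 with hb'
    set c := γ 1 0 with hc'
    set d := γ 1 1 with hd'
    have ha : a ∈ O := hγO 0 0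
    have hb : b ∈ O := hγO 0 1
    have hc : c ∈ O := hγO 1 0
    have hd : d ∈ O := hγO 1 1
    have hγ : γ = !![a, b; c, d] := Matrix.eta_fin_two γ
    set δ : Matrix (Fin 2) (Fin 2) ℍ :=
      !![star a * ↑(normSq d) - star c * (d * star b),
         star c * ↑(normSq b) - star a * (b * star d);
         star b * ↑(normSq c) - star d * (c * star a),
         star d * ↑(normSq a) - star b * (a * star c)] with hδ
    have hD : Dpoly γ = 1 := Dpoly_of_detH hγd
    have hDexpr : normSq a * normSq d + normSq c * normSq b
        - 2 * (c * star a * b * star d).re = 1 := hD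
    have hcoe : ((normSq a * normSq d + normSq c * normSq b
        - 2 * (c * star a * b * star d).re : ℝ) : ℍ) = 1 := by
      rw [hDexpr]; exact_mod_cast rfl
    have hγδ : γ * δ = 1 := by
      rw [hγ, hδ, Matrix.mul_fin_two, keyL00 a b c d, keyL01 a b c d, keyL10 a b c d,
        keyL11 a b c d, hcoe]
      exact Matrix.one_fin_two.symm
    have hδγ : δ * γ = 1 := by
      rw [hγ, hδ, Matrix.mul_fin_two, keyR00 a b c d, keyR01 a b c d, keyR10 a b c d,
        keyR11 a b c d, hcoe]
      exact Matrix.one_fin_two.symm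
    have hδD : Dpoly δ = 1 := by
      have h1 : Dpoly (γ * δ) = Dpoly γ * Dpoly δ := Dpoly_mul γ δ
      rw [hγδ, Dpoly_one, hD, one_mul] at h1
      exact h1.symm
    refine ⟨δ, ⟨?_, ?_⟩, hγδ, hδγ⟩
    · intro i j
      have hns : ∀ q : ℍ, q ∈ O → ((normSq q : ℝ) : ℍ) ∈ O := by
        intro q hq
        rw [← Quaternion.self_mul_star]
        exact mul_mem hq (hstar q hq)
      fin_cases i <;> fin_cases j
      · show star a * ↑(normSq d) - star c * (d * star b) ∈ O
        exact sub_mem (mul_mem (hstar a ha) (hns d hd))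
          (mul_mem (hstar c hc) (mul_mem hd (hstar b hb)))
      · show star c * ↑(normSq b) - star a * (b * star d) ∈ O
        exact sub_mem (mul_mem (hstar c hc) (hns b hb))
          (mul_mem (hstar a ha) (mul_mem hb (hstar d hd)))
      · show star b * ↑(normSq c) - star d * (c * star a) ∈ O
        exact sub_mem (mul_mem (hstar b hb) (hns c hc))
          (mul_mem (hstar d hd) (mul_mem hc (hstar a ha)))
      · show star d * ↑(normSq a) - star b * (a * star c) ∈ O
        exact sub_mem (mul_mem (hstar d hd) (hns a ha))
          (mul_mem (hstar b hb) (mul_mem ha (hstar c hc)))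
    · rw [detH_eq, hδD, Real.sqrt_one]
end

section
/- Let n > 1 be a squarefree integer, K = ℚ(√n), 𝒪_K its ring of integers, and let σ₁, σ₂ : K → ℝ be the two distinct real embeddings of K. Consider the map Φ from the set {q ∈ Quaternion K : all four coordinates of q lie in 𝒪_K} to ℍ × ℍ which sends q to the pair of real quaternions obtained by applying σ₁, respectively σ₂, to each of the four coordinates of q. Then Φ is an injective additive group homomorphism whose image is a discrete additive subgroup of ℍ × ℍ. -/
open Quaternion

private lemma quat_abs_coords_le_norm (z : ℍ) :
    |z.re| ≤ ‖z‖ ∧ |z.imI| ≤ ‖z‖ ∧ |z.imJ| ≤ ‖z‖ ∧ |z.imK| ≤ ‖z‖ := by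
  have h := Quaternion.normSq_eq_norm_mul_self z
  rw [Quaternion.normSq_def'] at h
  have h0 : (0:ℝ) ≤ ‖z‖ := norm_nonneg z
  refine ⟨?_, ?_, ?_, ?_⟩ <;>
    [skip; skip; skip; skip] <;>
    · rw [abs_le]; constructor <;> nlinarith [sq_nonneg z.re, sq_nonneg z.imI, sq_nonneg z.imJ, sq_nonneg z.imK]

private lemma rat_int_of_integral (r : ℝ) (q : ℚ) (h : r = (q:ℝ)) (hi : IsIntegral ℤ r) :
    ∃ m : ℤ, (m : ℚ) = q := by
  have hq : IsIntegral ℤ (q : ℚ) := by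
    rw [show ((q:ℝ)) = algebraMap ℚ ℝ q from rfl] at h
    exact (isIntegral_algebraMap_iff (algebraMap ℚ ℝ).injective).mp (h ▸ hi)
  exact IsIntegrallyClosed.isIntegral_iff.mp hq

/-- Let `K = ℚ(√n)` with `n > 1` squarefree, with its two real
embeddings `σ₁ ≠ σ₂`.  The Galois-twist map `Φ : q ↦ (σ₁ q, σ₂ q)` (applied
coordinatewise), restricted to the quaternions over `K` with integral
coordinates, is an injective additive homomorphism with discrete image in
`ℍ × ℍ`. -/
theorem order_galois_twist_discrete_embedding
    (n : ℕ) (hn : 1 < n) (hsq : Squarefree n)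
    (K : Type) [Field K] [Algebra ℚ K]
    (θ : K) (hθ : θ ^ 2 = (n : K)) (hadj : Algebra.adjoin ℚ {θ} = ⊤)
    (σ₁ σ₂ : K →+* ℝ) (hσ : σ₁ ≠ σ₂) :
    let O : Set (Quaternion K) :=
      {q | IsIntegral ℤ q.re ∧ IsIntegral ℤ q.imI ∧
        IsIntegral ℤ q.imJ ∧ IsIntegral ℤ q.imK}
    let Φ : Quaternion K → ℍ × ℍ := fun q =>
      ((⟨σ₁ q.re, σ₁ q.imI, σ₁ q.imJ, σ₁ q.imK⟩ : ℍ),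
       (⟨σ₂ q.re, σ₂ q.imI, σ₂ q.imJ, σ₂ q.imK⟩ : ℍ))
    (∀ p q : Quaternion K, Φ (p + q) = Φ p + Φ q) ∧
    Set.InjOn Φ O ∧
    (∀ x ∈ Φ '' O, ∃ ε > 0, ∀ y ∈ Φ '' O, dist x y < ε → y = x) := by
  intro O Φ
  -- decomposition of elements of K
  have hdec : ∀ a : K, ∃ x y : ℚ, a = algebraMap ℚ K x + algebraMap ℚ K y * θ := by
    intro a
    have ha : a ∈ Algebra.adjoin ℚ {θ} := hadj ▸ Algebra.mem_top
    have hθθ : θ * θ = algebraMap ℚ K ((n : ℚ)) := by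
      rw [← pow_two, hθ]; push_cast; simp
    induction ha using Algebra.adjoin_induction with
    | mem z hz => rcases hz with rfl; exact ⟨0, 1, by simp⟩
    | algebraMap r => exact ⟨r, 0, by simp⟩
    | add u v hu hv ihu ihv =>
      obtain ⟨x₁, y₁, rfl⟩ := ihu
      obtain ⟨x₂, y₂, rfl⟩ := ihv
      exact ⟨x₁ + x₂, y₁ + y₂, by simp [map_add]; ring⟩
    | mul u v hu hv ihu ihv =>
      obtain ⟨x₁, y₁, rfl⟩ := ihu
      obtain ⟨x₂, y₂, rfl⟩ := ihv
      refine ⟨x₁ * x₂ + y₁ * y₂ * n, x₁ * y₂ + x₂ * y₁, ?_⟩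
      simp only [map_add, map_mul]
      rw [show ∀ A B C D : K, (A + B * θ) * (C + D * θ) = A*C + B*D*(θ*θ) + (A*D + C*B)*θ
        from fun A B C D => by ring, hθθ]
  -- evaluation of embeddings
  have heval : ∀ (σ : K →+* ℝ) (x y : ℚ),
      σ (algebraMap ℚ K x + algebraMap ℚ K y * θ) = x + y * σ θ := by
    intro σ x y
    rw [map_add, map_mul]
    congr 1
    · exact_mod_cast eq_ratCast (σ.comp (algebraMap ℚ K)) x
    · congr 1; exact_mod_cast eq_ratCast (σ.comp (algebraMap ℚ K)) y
  have hsqθ : ∀ σ : K →+* ℝ, (σ θ) ^ 2 = (n : ℝ) := by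
    intro σ; rw [← map_pow, hθ]; simp
  -- σ₂ θ = - σ₁ θ
  have hneg : σ₂ θ = - σ₁ θ := by
    have h : (σ₁ θ - σ₂ θ) * (σ₁ θ + σ₂ θ) = 0 := by
      have := hsqθ σ₁; have := hsqθ σ₂; nlinarith
    rcases mul_eq_zero.mp h with h | h
    · exfalso
      apply hσ
      have hθeq : σ₁ θ = σ₂ θ := by linarith
      ext a
      obtain ⟨x, y, rfl⟩ := hdec a
      rw [heval, heval, hθeq]
    · linarith
  have hθpos : (0:ℝ) < σ₁ θ ^ 2 := by
    rw [hsqθ]; exact_mod_cast Nat.zero_lt_of_lt hn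
  -- the key smallness lemma
  have hzero : ∀ c : K, IsIntegral ℤ c → |σ₁ c| < 1/2 → |σ₂ c| < 1/2 → c = 0 := by
    intro c hc h1 h2
    obtain ⟨x, y, rfl⟩ := hdec c
    have e1 : σ₁ (algebraMap ℚ K x + algebraMap ℚ K y * θ) = x + y * σ₁ θ := heval _ _ _
    have e2 : σ₂ (algebraMap ℚ K x + algebraMap ℚ K y * θ) = x - y * σ₁ θ := by
      rw [heval, hneg]; ring
    have hi1 : IsIntegral ℤ (σ₁ (algebraMap ℚ K x + algebraMap ℚ K y * θ)) :=
      hc.map σ₁.toIntAlgHom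
    have hi2 : IsIntegral ℤ (σ₂ (algebraMap ℚ K x + algebraMap ℚ K y * θ)) :=
      hc.map σ₂.toIntAlgHom
    rw [e1] at h1 hi1
    rw [e2] at h2 hi2
    -- trace is an integer
    obtain ⟨m, hm⟩ := rat_int_of_integral ((x + y * σ₁ θ) + (x - y * σ₁ θ)) (2 * x)
      (by push_cast; ring) (hi1.add hi2)
    have hmr : ((m : ℝ)) = 2 * x := by
      have : ((m:ℚ):ℝ) = ((2*x : ℚ):ℝ) := by exact_mod_cast hm
      push_cast at this ⊢; linarith
    have hm0 : m = 0 := by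
      have : |(m:ℝ)| < 1 := by
        rw [hmr, show (2:ℝ)*x = (x + y*σ₁ θ) + (x - y*σ₁ θ) by ring]
        calc |(x + y*σ₁ θ) + (x - y*σ₁ θ)| ≤ _ := abs_add_le _ _
          _ < 1 := by push_cast at h1 h2 ⊢; linarith
      have h' := abs_lt.mp (by exact_mod_cast this : |m| < 1)
      omega
    have hx0 : (x:ℝ) = 0 := by
      rw [hm0] at hmr; push_cast at hmr; linarith
    have hx0' : x = 0 := by exact_mod_cast hx0
    -- norm is an integer
    obtain ⟨m', hm'⟩ := rat_int_of_integral ((x + y * σ₁ θ) * (x - y * σ₁ θ))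
      (x^2 - y^2 * n)
      (by rw [show (x + y*σ₁ θ)*(x - y*σ₁ θ) = x^2 - y^2 * (σ₁ θ)^2 by ring, hsqθ]; push_cast; ring)
      (hi1.mul hi2)
    have hm'r : ((m' : ℝ)) = (x:ℝ)^2 - (y:ℝ)^2 * n := by
      have : ((m':ℚ):ℝ) = ((x^2 - y^2*n : ℚ):ℝ) := by exact_mod_cast hm'
      push_cast at this ⊢; linarith
    have hm'0 : m' = 0 := by
      have habs : |(m':ℝ)| < 1 := by
        rw [hm'r, show (x:ℝ)^2 - (y:ℝ)^2*n = (x + y*σ₁ θ) * (x - y*σ₁ θ) by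
          rw [← hsqθ σ₁]; ring]
        rw [abs_mul]
        push_cast at h1 h2
        nlinarith [abs_nonneg (x + y*σ₁ θ), abs_nonneg (x - y*σ₁ θ)]
      have h' := abs_lt.mp (by exact_mod_cast habs : |m'| < 1)
      omega
    have hy0 : (y:ℝ) = 0 := by
      rw [hm'0] at hm'r; push_cast at hm'r
      have hn' : (0:ℝ) < n := by exact_mod_cast Nat.zero_lt_of_lt hn
      have hyy : (y:ℝ)^2 * n = 0 := by nlinarith [hx0]
      have : (y:ℝ)^2 = 0 := by
        rcases mul_eq_zero.mp hyy with h | h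
        · exact h
        · exact absurd h (ne_of_gt hn')
      exact pow_eq_zero_iff (by norm_num) |>.mp this
    have hy0' : y = 0 := by exact_mod_cast hy0
    rw [hx0', hy0']; simp
  -- injectivity of σ₁ gives injectivity of Φ
  have hΦinj : Function.Injective Φ := by
    intro p q h
    have h1 : σ₁ p.re = σ₁ q.re := congrArg (fun z : ℍ × ℍ => z.1.re) h
    have h2 : σ₁ p.imI = σ₁ q.imI := congrArg (fun z : ℍ × ℍ => z.1.imI) h
    have h3 : σ₁ p.imJ = σ₁ q.imJ := congrArg (fun z : ℍ × ℍ => z.1.imJ) h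
    have h4 : σ₁ p.imK = σ₁ q.imK := congrArg (fun z : ℍ × ℍ => z.1.imK) h
    ext <;> [exact σ₁.injective h1; exact σ₁.injective h2; exact σ₁.injective h3;
      exact σ₁.injective h4]
  refine ⟨?_, hΦinj.injOn, ?_⟩
  · intro p q
    simp only [Φ, Prod.mk_add_mk, Prod.mk.injEq]
    refine Prod.ext ?_ ?_ <;> ext <;> simp [map_add] <;> rfl
  · rintro x ⟨q₀, hq₀, rfl⟩
    refine ⟨1/2, by norm_num, ?_⟩
    rintro y ⟨q₁, hq₁, rfl⟩ hdist
    have hdist' : dist (Φ q₁) (Φ q₀) < 1/2 := by rw [dist_comm]; exact hdist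
    rw [Prod.dist_eq] at hdist'
    have hd1 : dist (Φ q₁).1 (Φ q₀).1 < 1/2 := lt_of_le_of_lt (le_max_left _ _) hdist'
    have hd2 : dist (Φ q₁).2 (Φ q₀).2 < 1/2 := lt_of_le_of_lt (le_max_right _ _) hdist'
    rw [dist_eq_norm] at hd1 hd2
    have hc1 := quat_abs_coords_le_norm ((Φ q₁).1 - (Φ q₀).1)
    have hc2 := quat_abs_coords_le_norm ((Φ q₁).2 - (Φ q₀).2)
    have hdiff : q₁ - q₀ = q₀ - q₀ → q₁ = q₀ := fun h => by
      have := congrArg (· + q₀) h; simpa using this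
    have key : q₁ = q₀ := by
      have hre : q₁.re - q₀.re = 0 := by
        have := hzero (q₁.re - q₀.re) (hq₁.1.sub hq₀.1) ?_ ?_
        · exact this
        · calc |σ₁ (q₁.re - q₀.re)| = |((Φ q₁).1 - (Φ q₀).1).re| := by
                simp [Φ, map_sub]; rfl
            _ ≤ ‖(Φ q₁).1 - (Φ q₀).1‖ := hc1.1
            _ < 1/2 := hd1
        · calc |σ₂ (q₁.re - q₀.re)| = |((Φ q₁).2 - (Φ q₀).2).re| := by
                simp [Φ, map_sub]; rfl
            _ ≤ ‖(Φ q₁).2 - (Φ q₀).2‖ := hc2.1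
            _ < 1/2 := hd2
      have himI : q₁.imI - q₀.imI = 0 := by
        have := hzero (q₁.imI - q₀.imI) (hq₁.2.1.sub hq₀.2.1) ?_ ?_
        · exact this
        · calc |σ₁ (q₁.imI - q₀.imI)| = |((Φ q₁).1 - (Φ q₀).1).imI| := by
                simp [Φ, map_sub]; rfl
            _ ≤ ‖(Φ q₁).1 - (Φ q₀).1‖ := hc1.2.1
            _ < 1/2 := hd1
        · calc |σ₂ (q₁.imI - q₀.imI)| = |((Φ q₁).2 - (Φ q₀).2).imI| := by
                simp [Φ, map_sub]; rfl
            _ ≤ ‖(Φ q₁).2 - (Φ q₀).2‖ := hc2.2.1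
            _ < 1/2 := hd2
      have himJ : q₁.imJ - q₀.imJ = 0 := by
        have := hzero (q₁.imJ - q₀.imJ) (hq₁.2.2.1.sub hq₀.2.2.1) ?_ ?_
        · exact this
        · calc |σ₁ (q₁.imJ - q₀.imJ)| = |((Φ q₁).1 - (Φ q₀).1).imJ| := by
                simp [Φ, map_sub]; rfl
            _ ≤ ‖(Φ q₁).1 - (Φ q₀).1‖ := hc1.2.2.1
            _ < 1/2 := hd1
        · calc |σ₂ (q₁.imJ - q₀.imJ)| = |((Φ q₁).2 - (Φ q₀).2).imJ| := by
                simp [Φ, map_sub]; rfl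
            _ ≤ ‖(Φ q₁).2 - (Φ q₀).2‖ := hc2.2.2.1
            _ < 1/2 := hd2
      have himK : q₁.imK - q₀.imK = 0 := by
        have := hzero (q₁.imK - q₀.imK) (hq₁.2.2.2.sub hq₀.2.2.2) ?_ ?_
        · exact this
        · calc |σ₁ (q₁.imK - q₀.imK)| = |((Φ q₁).1 - (Φ q₀).1).imK| := by
                simp [Φ, map_sub]; rfl
            _ ≤ ‖(Φ q₁).1 - (Φ q₀).1‖ := hc1.2.2.2
            _ < 1/2 := hd1
        · calc |σ₂ (q₁.imK - q₀.imK)| = |((Φ q₁).2 - (Φ q₀).2).imK| := by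
                simp [Φ, map_sub]; rfl
            _ ≤ ‖(Φ q₁).2 - (Φ q₀).2‖ := hc2.2.2.2
            _ < 1/2 := hd2
      ext <;> [exact sub_eq_zero.mp hre; exact sub_eq_zero.mp himI;
        exact sub_eq_zero.mp himJ; exact sub_eq_zero.mp himK]
    rw [key]
end
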